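/- Let B_1 be an M×n complex matrix, B_2 a (p−M)×n complex matrix, B the p×n matrix obtained by stacking B_1 on top of B_2, and let l ≠ 0 be a scalar such that l·I_{p−M} − (1/n)B_2 B_2* is invertible. Then l·I_n − (1/n)B_2* B_2 is also invertible, and det( l·I_p − (1/n) B B* ) = 0 if and only if det( I_M − (1/n) B_1 ( l·I_n − (1/n) B_2* B_2 )^{-1} B_1* ) = 0. -/

import Mathlib

open Matrix

noncomputable section

/-- **Deterministic eigen-equation reduction (Schur complement / in-out exchange).**
Let `B1` be an `M × n` complex matrix, `B2` an `r × n` complex matrix (with `r = p - M`),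
`B` the `p × n` matrix obtained by stacking `B1` on top of `B2`, and `l ≠ 0` a scalar such
that `l • I_r - (1/n) B2 B2ᴴ` is invertible.  Then `l • I_n - (1/n) B2ᴴ B2` is also
invertible, and `det (l • I_p - (1/n) B Bᴴ) = 0` if and only if
`det (I_M - (1/n) B1 (l • I_n - (1/n) B2ᴴ B2)⁻¹ B1ᴴ) = 0`. -/
theorem statement11 {M r n : ℕ}
    (B1 : Matrix (Fin M) (Fin n) ℂ) (B2 : Matrix (Fin r) (Fin n) ℂ)
    (l : ℂ) (hl : l ≠ 0)
    (hinv : IsUnit (l • (1 : Matrix (Fin r) (Fin r) ℂ) - (n : ℂ)⁻¹ • (B2 * B2ᴴ))) :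
    IsUnit (l • (1 : Matrix (Fin n) (Fin n) ℂ) - (n : ℂ)⁻¹ • (B2ᴴ * B2)) ∧
    ((l • (1 : Matrix (Fin M ⊕ Fin r) (Fin M ⊕ Fin r) ℂ)
          - (n : ℂ)⁻¹ • (Matrix.fromRows B1 B2 * (Matrix.fromRows B1 B2)ᴴ)).det = 0 ↔
      ((1 : Matrix (Fin M) (Fin M) ℂ)
          - (n : ℂ)⁻¹ • (B1 * (l • (1 : Matrix (Fin n) (Fin n) ℂ)
              - (n : ℂ)⁻¹ • (B2ᴴ * B2))⁻¹ * B1ᴴ)).det = 0) := by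
  set c : ℂ := (n : ℂ)⁻¹ with hc
  set D : Matrix (Fin r) (Fin r) ℂ := l • 1 - c • (B2 * B2ᴴ) with hD
  set S : Matrix (Fin n) (Fin n) ℂ := l • 1 - c • (B2ᴴ * B2) with hS
  -- determinant of D and S in terms of the "small" determinants
  have hfacS : S = l • ((1 : Matrix (Fin n) (Fin n) ℂ) - (l⁻¹ * c) • (B2ᴴ * B2)) := by
    rw [hS, smul_sub, smul_smul, mul_inv_cancel_left₀ hl]
  have hfacD : D = l • ((1 : Matrix (Fin r) (Fin r) ℂ) - (l⁻¹ * c) • (B2 * B2ᴴ)) := by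
    rw [hD, smul_sub, smul_smul, mul_inv_cancel_left₀ hl]
  have hdetS : S.det = l ^ n *
      ((1 : Matrix (Fin n) (Fin n) ℂ) - (l⁻¹ * c) • (B2ᴴ * B2)).det := by
    rw [hfacS, det_smul, Fintype.card_fin]
  have hdetD : D.det = l ^ r *
      ((1 : Matrix (Fin r) (Fin r) ℂ) - (l⁻¹ * c) • (B2 * B2ᴴ)).det := by
    rw [hfacD, det_smul, Fintype.card_fin]
  have hswap : ((1 : Matrix (Fin n) (Fin n) ℂ) - (l⁻¹ * c) • (B2ᴴ * B2)).det
      = ((1 : Matrix (Fin r) (Fin r) ℂ) - (l⁻¹ * c) • (B2 * B2ᴴ)).det := by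
    have h1 : (1 : Matrix (Fin n) (Fin n) ℂ) - (l⁻¹ * c) • (B2ᴴ * B2)
        = 1 + B2ᴴ * ((-(l⁻¹ * c)) • B2) := by
      rw [Matrix.mul_smul, neg_smul, ← sub_eq_add_neg]
    have h2 : (1 : Matrix (Fin r) (Fin r) ℂ) - (l⁻¹ * c) • (B2 * B2ᴴ)
        = 1 + ((-(l⁻¹ * c)) • B2) * B2ᴴ := by
      rw [Matrix.smul_mul, neg_smul, ← sub_eq_add_neg]
    rw [h1, h2, det_one_add_mul_comm]
  have hDdet : D.det ≠ 0 :=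
    isUnit_iff_ne_zero.mp ((Matrix.isUnit_iff_isUnit_det D).mp hinv)
  have hd : ((1 : Matrix (Fin r) (Fin r) ℂ) - (l⁻¹ * c) • (B2 * B2ᴴ)).det ≠ 0 := by
    intro h
    exact hDdet (by rw [hdetD, h, mul_zero])
  have hSdet : S.det ≠ 0 := by
    rw [hdetS, hswap]
    exact mul_ne_zero (pow_ne_zero _ hl) hd
  have hSunit : IsUnit S :=
    (Matrix.isUnit_iff_isUnit_det S).mpr (isUnit_iff_ne_zero.mpr hSdet)
  refine ⟨hSunit, ?_⟩
  haveI : Invertible D := hinv.invertible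
  have hD_inv : D * D⁻¹ = 1 := Matrix.mul_nonsing_inv D (isUnit_iff_ne_zero.mpr hDdet)
  -- block decomposition
  have hBB : fromRows B1 B2 * (fromRows B1 B2)ᴴ
      = fromBlocks (B1 * B1ᴴ) (B1 * B2ᴴ) (B2 * B1ᴴ) (B2 * B2ᴴ) := by
    rw [conjTranspose_fromRows_eq_fromCols_conjTranspose, fromRows_mul_fromCols]
  have hblock : l • (1 : Matrix (Fin M ⊕ Fin r) (Fin M ⊕ Fin r) ℂ)
        - c • (fromRows B1 B2 * (fromRows B1 B2)ᴴ)
      = fromBlocks (l • 1 - c • (B1 * B1ᴴ)) (-(c • (B1 * B2ᴴ)))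
          (-(c • (B2 * B1ᴴ))) D := by
    rw [hBB, ← fromBlocks_one, fromBlocks_smul, fromBlocks_smul, sub_eq_add_neg,
      fromBlocks_neg, fromBlocks_add]
    simp [hD, sub_eq_add_neg]
  -- the key inverse identity
  have hSB : S * B2ᴴ = B2ᴴ * D := by
    rw [hS, hD]
    simp only [Matrix.sub_mul, Matrix.mul_sub, Matrix.smul_mul, Matrix.mul_smul,
      Matrix.one_mul, Matrix.mul_one, Matrix.mul_assoc]
  have hX : S * (l⁻¹ • ((1 : Matrix (Fin n) (Fin n) ℂ) + c • (B2ᴴ * D⁻¹ * B2))) = 1 := by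
    have key : S * (B2ᴴ * D⁻¹ * B2) = B2ᴴ * B2 := by
      rw [show B2ᴴ * D⁻¹ * B2 = B2ᴴ * (D⁻¹ * B2) from by rw [Matrix.mul_assoc],
        ← Matrix.mul_assoc S, hSB, Matrix.mul_assoc B2ᴴ D, ← Matrix.mul_assoc D,
        hD_inv, Matrix.one_mul]
    rw [Matrix.mul_smul, Matrix.mul_add, Matrix.mul_one, Matrix.mul_smul, key, hS,
      sub_add_cancel, smul_smul, inv_mul_cancel₀ hl, one_smul]
  have hSinv : S⁻¹ = l⁻¹ • ((1 : Matrix (Fin n) (Fin n) ℂ) + c • (B2ᴴ * D⁻¹ * B2)) :=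
    Matrix.inv_eq_right_inv hX
  -- Schur complement computation
  have hT : (l • 1 - c • (B1 * B1ᴴ)) - (-(c • (B1 * B2ᴴ))) * D⁻¹ * (-(c • (B2 * B1ᴴ)))
      = l • ((1 : Matrix (Fin M) (Fin M) ℂ) - c • (B1 * S⁻¹ * B1ᴴ)) := by
    rw [hSinv]
    simp only [Matrix.mul_smul, Matrix.smul_mul, Matrix.mul_add, Matrix.add_mul,
      Matrix.mul_one, Matrix.neg_mul, Matrix.mul_neg, neg_neg, smul_add, smul_smul,
      smul_sub, sub_eq_add_neg, neg_add, Matrix.mul_assoc]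
    match_scalars <;> field_simp <;> ring
  -- conclude
  rw [hblock, det_fromBlocks₂₂, invOf_eq_nonsing_inv, hT, det_smul, Fintype.card_fin]
  constructor
  · intro h
    rcases mul_eq_zero.mp h with h | h
    · exact absurd h hDdet
    · rcases mul_eq_zero.mp h with h | h
      · exact absurd h (pow_ne_zero _ hl)
      · exact h
  · intro h
    rw [h, mul_zero, mul_zero]
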